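/- Let L be a finite-dimensional Lie algebra over a field F. If every maximal subalgebra M of L has trivial c-section (i.e., for every chief factor C/D of L with D ⊆ M and L = M + C one has M ∩ C = D), then L is solvable. -/

import Mathlib

/-- `M` is a maximal (proper) subalgebra of `L`. -/
def IsMaximalSubalgebra {F : Type*} [Field F] {L : Type*} [LieRing L] [LieAlgebra F L]
    (M : LieSubalgebra F L) : Prop :=
  M ≠ ⊤ ∧ ∀ K : LieSubalgebra F L, M < K → K = ⊤

/-- `C/D` is a chief factor of `L`: `D < C` are ideals of `L` and there is no ideal of `L`
strictly between them (equivalently, `C/D` is a minimal nonzero ideal of `L/D`). -/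
def IsChiefFactor {F : Type*} [Field F] {L : Type*} [LieRing L] [LieAlgebra F L]
    (D C : LieIdeal F L) : Prop :=
  D < C ∧ ∀ K : LieIdeal F L, D ≤ K → K ≤ C → K = D ∨ K = C

/-- The subquotient `S/(S ∩ D)`, as a Lie algebra; when `D ⊆ S` this is `S/D`. -/
abbrev SubQuot {F : Type*} [Field F] {L : Type*} [LieRing L] [LieAlgebra F L]
    (S : LieSubalgebra F L) (D : LieIdeal F L) :=
  S ⧸ LieIdeal.comap S.incl D

/-- The core `M_L` of a subalgebra `M`: the largest ideal of `L` contained in `M`. -/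
def coreOf {F : Type*} [Field F] {L : Type*} [LieRing L] [LieAlgebra F L]
    (M : LieSubalgebra F L) : LieIdeal F L :=
  sSup {I : LieIdeal F L | (I : Set L) ⊆ M}

section Aux

variable {F : Type*} [Field F] {L : Type*} [LieRing L] [LieAlgebra F L]

open Module FiniteDimensional

/-- Every proper subalgebra of a finite-dimensional Lie algebra lies in a maximal one. -/
lemma exists_maximal_above [FiniteDimensional F L] (S : LieSubalgebra F L) (hS : S ≠ ⊤) :
    ∃ M : LieSubalgebra F L, IsMaximalSubalgebra M ∧ S ≤ M := by
  suffices H : ∀ n (S : LieSubalgebra F L), finrank F L - finrank F S.toSubmodule ≤ n →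
      S ≠ ⊤ → ∃ M : LieSubalgebra F L, IsMaximalSubalgebra M ∧ S ≤ M from
    H _ S le_rfl hS
  intro n
  induction n with
  | zero =>
    intro S hn hS
    exfalso
    apply hS
    have h1 : finrank F S.toSubmodule ≤ finrank F L := Submodule.finrank_le _
    have h2 : finrank F L ≤ finrank F S.toSubmodule := by omega
    have := Submodule.eq_top_of_finrank_eq (le_antisymm h1 h2)
    rwa [← LieSubalgebra.toSubmodule_inj, LieSubalgebra.top_toSubmodule]
  | succ n ih =>
    intro S hn hS
    by_cases hmax : ∀ K : LieSubalgebra F L, S < K → K = ⊤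
    · exact ⟨S, ⟨hS, hmax⟩, le_rfl⟩
    · push_neg at hmax
      obtain ⟨K, hK1, hK2⟩ := hmax
      have hlt : S.toSubmodule < K.toSubmodule := by
        rw [lt_iff_le_and_ne]
        refine ⟨?_, ?_⟩
        · exact fun x hx => hK1.le hx
        · intro hEq
          exact hK1.ne (by rwa [LieSubalgebra.toSubmodule_inj] at hEq)
      have : finrank F S.toSubmodule < finrank F K.toSubmodule :=
        Submodule.finrank_lt_finrank_of_lt hlt
      obtain ⟨M, hM, hKM⟩ := ih K (by omega) hK2
      exact ⟨M, hM, le_trans hK1.le hKM⟩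

/-- Fitting-style lemma: for `x` in an ideal `C`, the Engel subalgebra of `x` together with `C`
spans `L`. -/
lemma engel_sup_ideal_eq_top [FiniteDimensional F L] (C : LieIdeal F L) {x : L} (hx : x ∈ C) :
    (LieSubalgebra.engel F x).toSubmodule ⊔ C.toSubmodule = ⊤ := by
  rcases Nat.eq_zero_or_pos (finrank F L) with h0 | hpos
  · have : Subsingleton L := by
      exact Module.finrank_zero_iff.mp h0
    have : Subsingleton (Submodule F L) := inferInstance
    exact Subsingleton.elim _ _
  · have hn : 0 < finrank F L := hpos
    set f := LieAlgebra.ad F L x with hf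
    -- the ideal `C` is stable under `f`
    have hstab : ∀ (m : ℕ) (y : L), y ∈ C → (f ^ m) y ∈ C := by
      intro m
      induction m with
      | zero => intro y hy; simpa using hy
      | succ m ihm =>
        intro y hy
        rw [pow_succ, Module.End.mul_apply]
        exact ihm _ (lie_mem_right F L C x y hy)
    have hker : LinearMap.ker (f ^ finrank F L) ≤ (LieSubalgebra.engel F x).toSubmodule := by
      intro y hy
      rw [LieSubalgebra.mem_toSubmodule, LieSubalgebra.mem_engel_iff]
      exact ⟨finrank F L, hy⟩
    have hrange : LinearMap.range (f ^ finrank F L) ≤ C.toSubmodule := by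
      rintro _ ⟨y, rfl⟩
      obtain ⟨m, hm⟩ : ∃ m, finrank F L = m + 1 := ⟨finrank F L - 1, by omega⟩
      rw [hm, pow_succ, Module.End.mul_apply]
      exact hstab m _ (lie_mem_left F L C x y hx)
    have hdisj : LinearMap.ker (f ^ finrank F L) ⊓ LinearMap.range (f ^ finrank F L) = ⊥ := by
      rw [eq_bot_iff]
      rintro v ⟨hv1, y, rfl⟩
      have h2n : LinearMap.ker (f ^ (finrank F L + finrank F L)) =
          LinearMap.ker (f ^ finrank F L) := by
        rw [Module.End.ker_pow_eq_ker_pow_finrank_of_le (by omega),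
          Module.End.ker_pow_eq_ker_pow_finrank_of_le (le_refl (finrank F L))]
      have : y ∈ LinearMap.ker (f ^ (finrank F L + finrank F L)) := by
        rw [LinearMap.mem_ker, pow_add, Module.End.mul_apply]
        exact hv1
      rw [h2n, LinearMap.mem_ker] at this
      simp [this]
    have hsum : finrank F ↥(LinearMap.ker (f ^ finrank F L) ⊔ LinearMap.range (f ^ finrank F L)) = finrank F L := by
      have hadd := Submodule.finrank_sup_add_finrank_inf_eq
        (LinearMap.ker (f ^ finrank F L)) (LinearMap.range (f ^ finrank F L))
      rw [hdisj] at hadd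
      simp only [finrank_bot, add_zero] at hadd
      have := LinearMap.finrank_range_add_finrank_ker (f ^ finrank F L)
      omega
    have htop : LinearMap.ker (f ^ finrank F L) ⊔ LinearMap.range (f ^ finrank F L) = ⊤ :=
      Submodule.eq_top_of_finrank_eq hsum
    rw [eq_top_iff, ← htop]
    exact sup_le_sup hker hrange

/-- Key lemma: if `C/D` is a chief factor and all c-sections are trivial, then every `x ∈ C`
acts nilpotently on `L` modulo `D`. -/
lemma key_nilpotent_mod [FiniteDimensional F L]
    (h : ∀ M : LieSubalgebra F L, IsMaximalSubalgebra M →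
      ∀ C D : LieIdeal F L, IsChiefFactor D C → (D : Set L) ⊆ (M : Set L) →
        M.toSubmodule ⊔ C.toSubmodule = ⊤ → (M : Set L) ∩ (C : Set L) = (D : Set L))
    {D C : LieIdeal F L} (hcf : IsChiefFactor D C) {x : L} (hx : x ∈ C) :
    ∃ n : ℕ, ∀ y : L, ((LieAlgebra.ad F L x) ^ n) y ∈ D := by
  classical
  set f := LieAlgebra.ad F L x with hf
  have hstabD : ∀ (m : ℕ) (y : L), y ∈ D → (f ^ m) y ∈ D := by
    intro m
    induction m with
    | zero => intro y hy; simpa using hy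
    | succ m ihm =>
      intro y hy
      rw [pow_succ, Module.End.mul_apply]
      exact ihm _ (lie_mem_right F L D x y hy)
  -- The subalgebra generated by the Engel subalgebra of `x` and `D`.
  set E : LieSubalgebra F L := LieSubalgebra.engel F x with hE
  have hlie : ∀ a b : L, a ∈ E.toSubmodule ⊔ D.toSubmodule → b ∈ E.toSubmodule ⊔ D.toSubmodule →
      ⁅a, b⁆ ∈ E.toSubmodule ⊔ D.toSubmodule := by
    intro a b ha hb
    obtain ⟨e₁, he₁, d₁, hd₁, rfl⟩ := Submodule.mem_sup.mp ha
    obtain ⟨e₂, he₂, d₂, hd₂, rfl⟩ := Submodule.mem_sup.mp hb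
    rw [LieSubalgebra.mem_toSubmodule] at he₁ he₂
    have expand : ⁅e₁ + d₁, e₂ + d₂⁆ = ⁅e₁, e₂⁆ + (⁅e₁, d₂⁆ + (⁅d₁, e₂⁆ + ⁅d₁, d₂⁆)) := by
      rw [add_lie, lie_add, lie_add]; abel
    rw [expand]
    refine Submodule.add_mem _ (Submodule.mem_sup_left ?_) (Submodule.add_mem _
      (Submodule.mem_sup_right ?_) (Submodule.add_mem _ (Submodule.mem_sup_right ?_)
      (Submodule.mem_sup_right ?_)))
    · exact E.lie_mem he₁ he₂
    · exact lie_mem_right F L D e₁ d₂ hd₂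
    · exact lie_mem_left F L D d₁ e₂ hd₁
    · exact lie_mem_right F L D d₁ d₂ hd₂
  set E' : LieSubalgebra F L :=
    { E.toSubmodule ⊔ D.toSubmodule with
      lie_mem' := fun {a b} ha hb => hlie a b ha hb } with hE'
  have hE'mem : ∀ z : L, z ∈ E' ↔ z ∈ E.toSubmodule ⊔ D.toSubmodule := fun z => Iff.rfl
  by_cases htop : E' = ⊤
  · -- uniform nilpotency: everything is (Engel part) + (D part)
    refine ⟨finrank F L, fun y => ?_⟩
    have hy : y ∈ E.toSubmodule ⊔ D.toSubmodule := by
      rw [← hE'mem, htop]; exact LieSubalgebra.mem_top y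
    obtain ⟨e, he, d, hd, rfl⟩ := Submodule.mem_sup.mp hy
    rw [map_add]
    have he0 : (f ^ finrank F L) e = 0 := by
      rw [LieSubalgebra.mem_toSubmodule, LieSubalgebra.mem_engel_iff] at he
      obtain ⟨m, hm⟩ := he
      have : e ∈ LinearMap.ker (f ^ m) := hm
      have := Module.End.ker_pow_le_ker_pow_finrank f m this
      exact this
    rw [he0, zero_add]
    exact hstabD _ d hd
  · -- `E'` is proper; extend to a maximal subalgebra and use the hypothesis
    obtain ⟨M, hMmax, hEM⟩ := exists_maximal_above E' htop
    have hDM : (D : Set L) ⊆ (M : Set L) := by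
      intro d hd
      exact hEM ((hE'mem d).mpr (Submodule.mem_sup_right hd))
    have hsup : M.toSubmodule ⊔ C.toSubmodule = ⊤ := by
      rw [eq_top_iff, ← engel_sup_ideal_eq_top C hx]
      apply sup_le_sup_right
      intro z hz
      rw [LieSubalgebra.mem_toSubmodule]
      exact hEM ((hE'mem z).mpr (Submodule.mem_sup_left hz))
    have hMC := h M hMmax C D hcf hDM hsup
    have hxM : x ∈ M := hEM ((hE'mem x).mpr
      (Submodule.mem_sup_left (LieSubalgebra.self_mem_engel F x)))
    have hxD : x ∈ D := by
      have : x ∈ (M : Set L) ∩ (C : Set L) := ⟨hxM, hx⟩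
      rwa [hMC] at this
    exact ⟨1, fun y => by simpa [hf] using lie_mem_left F L D x y hxD⟩

/-- Every chief factor is abelian. -/
lemma chief_factor_abelian [FiniteDimensional F L]
    (h : ∀ M : LieSubalgebra F L, IsMaximalSubalgebra M →
      ∀ C D : LieIdeal F L, IsChiefFactor D C → (D : Set L) ⊆ (M : Set L) →
        M.toSubmodule ⊔ C.toSubmodule = ⊤ → (M : Set L) ∩ (C : Set L) = (D : Set L))
    {D C : LieIdeal F L} (hcf : IsChiefFactor D C) :
    ⁅C, C⁆ ≤ D := by
  classical
  rw [LieSubmodule.lie_le_iff]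
  by_contra hab
  push_neg at hab
  obtain ⟨a, ha, b, hb, habD⟩ := hab
  -- The quotient module `Q = C/D` as a module over the Lie algebra `C`.
  set D' : LieSubmodule F L ↥C := LieSubmodule.comap (LieSubmodule.incl C) D with hD'
  have hD'mem : ∀ w : ↥C, w ∈ D' ↔ (w : L) ∈ D := by
    intro w
    rw [hD', LieSubmodule.mem_comap, LieSubmodule.incl_apply]
  -- every element of `C` acts nilpotently on `Q`
  have hnil : ∀ x : ↥C, IsNilpotent (LieModule.toEnd F ↥C (↥C ⧸ D') x) := by
    intro x
    obtain ⟨n, hn⟩ := key_nilpotent_mod h hcf x.2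
    have hstabC : ∀ w ∈ C.toSubmodule, (LieAlgebra.ad F L (x : L)) w ∈ C.toSubmodule :=
      fun w hw => lie_mem_right F L C (x : L) w hw
    set T : Module.End F ↥C := (LieAlgebra.ad F L (x : L)).restrict hstabC with hT
    have hcomm : ∀ (m : ℕ) (z : ↥C),
        ((LieModule.toEnd F ↥C (↥C ⧸ D') x) ^ m) (LieSubmodule.Quotient.mk' D' z) =
          LieSubmodule.Quotient.mk' D' ((T ^ m) z) := by
      intro m
      induction m with
      | zero => intro z; simp
      | succ m ihm =>
        intro z
        rw [pow_succ', Module.End.mul_apply, ihm, pow_succ', Module.End.mul_apply]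
        have h1 : (LieModule.toEnd F ↥C (↥C ⧸ D') x) (LieSubmodule.Quotient.mk' D' ((T ^ m) z)) =
            ⁅(x : L), LieSubmodule.Quotient.mk' D' ((T ^ m) z)⁆ := by
          rw [LieModule.toEnd_apply_apply, LieIdeal.coe_bracket_of_module]
        rw [h1, ← LieModuleHom.map_lie]
        have h2 : ⁅(x : L), (T ^ m) z⁆ = T ((T ^ m) z) := Subtype.ext rfl
        rw [h2]
    refine ⟨n, ?_⟩
    apply LinearMap.ext
    intro q
    obtain ⟨z, rfl⟩ := LieSubmodule.Quotient.surjective_mk' D' q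
    rw [hcomm n z, LinearMap.zero_apply, LieSubmodule.Quotient.mk_eq_zero, hD'mem]
    have : ((T ^ n) z : L) = ((LieAlgebra.ad F L (x : L)) ^ n) (z : L) := by
      rw [hT, Module.End.pow_restrict]
      rfl
    rw [this]
    exact hn _
  have hQnil : LieModule.IsNilpotent ↥C (↥C ⧸ D') :=
    (LieModule.isNilpotent_iff_forall' (R := F)).mpr hnil
  obtain ⟨z₀, hz₀C, hz₀D⟩ := SetLike.exists_of_lt hcf.1
  have hQnontriv : Nontrivial (↥C ⧸ D') := by
    refine ⟨LieSubmodule.Quotient.mk' D' ⟨z₀, hz₀C⟩, 0, fun hEq => hz₀D ?_⟩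
    rw [LieSubmodule.Quotient.mk_eq_zero, hD'mem] at hEq
    exact hEq
  haveI := hQnil
  haveI := hQnontriv
  haveI := LieModule.nontrivial_max_triv_of_isNilpotent (R := F) (L := ↥C) (M := ↥C ⧸ D')
  obtain ⟨q, hq0⟩ := exists_ne (0 : LieModule.maxTrivSubmodule F ↥C (↥C ⧸ D'))
  obtain ⟨z, hz⟩ := LieSubmodule.Quotient.surjective_mk' D' (q : ↥C ⧸ D')
  have hzD : (z : L) ∉ D := by
    intro hmem
    have hq : (q : ↥C ⧸ D') = 0 := by
      rw [← hz, LieSubmodule.Quotient.mk_eq_zero, hD'mem]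
      exact hmem
    exact hq0 (Subtype.ext hq)
  have hcent : ∀ c ∈ C, ⁅c, (z : L)⁆ ∈ D := by
    intro c hc
    have h1 : ⁅(⟨c, hc⟩ : ↥C), (q : ↥C ⧸ D')⁆ = 0 :=
      (LieModule.mem_maxTrivSubmodule F ↥C (↥C ⧸ D') (q : ↥C ⧸ D')).mp q.2 _
    rw [← hz, LieIdeal.coe_bracket_of_module, ← LieModuleHom.map_lie,
      LieSubmodule.Quotient.mk_eq_zero, hD'mem] at h1
    simpa using h1
  -- the set of elements centralizing `C` modulo `D` is an ideal of `L`
  set W : LieIdeal F L :=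
    { carrier := {y : L | ∀ c ∈ C, ⁅c, y⁆ ∈ D}
      add_mem' := fun {y₁ y₂} h1 h2 c hc => by
        rw [lie_add]; exact D.add_mem (h1 c hc) (h2 c hc)
      zero_mem' := fun c hc => by rw [lie_zero]; exact D.zero_mem
      smul_mem' := fun t y hy c hc => by
        rw [lie_smul]; exact D.smul_mem t (hy c hc)
      lie_mem := fun {l m} hm c hc => by
        rw [leibniz_lie]
        exact D.add_mem (hm _ (lie_mem_left F L C c l hc))
          (lie_mem_right F L D l _ (hm c hc)) } with hW
  have hWmem : ∀ y : L, y ∈ W ↔ ∀ c ∈ C, ⁅c, y⁆ ∈ D := fun y => Iff.rfl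
  have hDV : D ≤ W ⊓ C := by
    refine le_inf (fun y hy => ?_) hcf.1.le
    exact fun c hc => lie_mem_right F L D c y hy
  rcases hcf.2 (W ⊓ C) hDV inf_le_right with hV | hV
  · -- impossible: `z ∈ W ⊓ C` but `z ∉ D`
    apply hzD
    rw [← hV]
    exact (LieSubmodule.mem_inf _ _ _).mpr ⟨(hWmem _).mpr hcent, z.2⟩
  · -- impossible: then `⁅C, C⁆ ≤ D`
    apply habD
    have hbW : b ∈ W ⊓ C := hV.symm ▸ hb
    exact ((LieSubmodule.mem_inf _ _ _).mp hbW).1 a ha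

end Aux

open Module in
/-- If every maximal subalgebra of a finite-dimensional Lie algebra `L` has trivial
c-section, then `L` is solvable. -/
theorem solvable_of_all_cSections_trivial {F : Type*} [Field F] {L : Type*} [LieRing L]
    [LieAlgebra F L] [FiniteDimensional F L]
    (h : ∀ M : LieSubalgebra F L, IsMaximalSubalgebra M →
      ∀ C D : LieIdeal F L, IsChiefFactor D C → (D : Set L) ⊆ (M : Set L) →
        M.toSubmodule ⊔ C.toSubmodule = ⊤ → (M : Set L) ∩ (C : Set L) = (D : Set L)) :
    LieAlgebra.IsSolvable L := by
  classical
  have tolt : ∀ A B : LieIdeal F L, A < B → A.toSubmodule < B.toSubmodule := by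
    intro A B hAB
    rw [lt_iff_le_and_ne] at hAB ⊢
    exact ⟨fun x hx => hAB.1 hx,
      fun hEq => hAB.2 (LieSubmodule.toSubmodule_inj (N := A) (N' := B) |>.mp hEq)⟩
  suffices H : ∀ (n : ℕ) (I : LieIdeal F L), finrank F I.toSubmodule ≤ n →
      ∃ k, LieAlgebra.derivedSeriesOfIdeal F L k I = ⊥ by
    obtain ⟨k, hk⟩ := H (finrank F (⊤ : LieIdeal F L).toSubmodule) ⊤ le_rfl
    exact LieAlgebra.IsSolvable.mk (R := F) (k := k) (by rwa [LieAlgebra.derivedSeries_def])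
  intro n
  induction n with
  | zero =>
    intro I hI
    refine ⟨0, ?_⟩
    rw [LieAlgebra.derivedSeriesOfIdeal_zero]
    rw [← LieSubmodule.toSubmodule_inj, LieSubmodule.bot_toSubmodule]
    exact Submodule.finrank_eq_zero.mp (Nat.le_zero.mp hI)
  | succ n ih =>
    intro I hI
    by_cases hbot : I = ⊥
    · exact ⟨0, by rwa [LieAlgebra.derivedSeriesOfIdeal_zero]⟩
    · -- pick an ideal `D < I` of maximal dimension; then `I/D` is a chief factor
      set s : Set ℕ := (fun K : LieIdeal F L => finrank F K.toSubmodule) '' {K | K < I} with hs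
      have hne : s.Nonempty := ⟨_, ⟨⊥, bot_lt_iff_ne_bot.mpr hbot, rfl⟩⟩
      have hbdd : BddAbove s := by
        refine ⟨finrank F L, ?_⟩
        rintro m ⟨K, -, rfl⟩
        exact Submodule.finrank_le _
      obtain ⟨D, hDlt, hDrank⟩ := Nat.sSup_mem hne hbdd
      have hcf : IsChiefFactor D I := by
        refine ⟨hDlt, fun K hDK hKI => ?_⟩
        by_cases hKI' : K = I
        · right; exact hKI'
        · left
          have hDrank' : finrank F D.toSubmodule = sSup s := hDrank
          have hKs : finrank F K.toSubmodule ≤ sSup s :=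
            le_csSup hbdd ⟨K, lt_of_le_of_ne hKI hKI', rfl⟩
          rw [← hDrank'] at hKs
          symm
          rw [← LieSubmodule.toSubmodule_inj]
          exact Submodule.eq_of_le_of_finrank_le (fun x hx => hDK hx) hKs
      have habel : ⁅I, I⁆ ≤ D := chief_factor_abelian h hcf
      have hrD : finrank F D.toSubmodule < finrank F I.toSubmodule :=
        Submodule.finrank_lt_finrank_of_lt (tolt _ _ hDlt)
      obtain ⟨k, hk⟩ := ih D (by omega)
      refine ⟨k + 1, ?_⟩
      rw [le_bot_iff.symm, ← hk]
      calc LieAlgebra.derivedSeriesOfIdeal F L (k + 1) I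
          = LieAlgebra.derivedSeriesOfIdeal F L k
              (LieAlgebra.derivedSeriesOfIdeal F L 1 I) := by
            rw [← LieAlgebra.derivedSeriesOfIdeal_add]
        _ ≤ LieAlgebra.derivedSeriesOfIdeal F L k D := by
            apply LieAlgebra.derivedSeriesOfIdeal_mono
            rw [LieAlgebra.derivedSeriesOfIdeal_succ, LieAlgebra.derivedSeriesOfIdeal_zero]
            exact habel
        _ ≤ LieAlgebra.derivedSeriesOfIdeal F L k D := le_rfl
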